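/- Let q > 3 be odd, A = M_{2n}(F_q), a~ = J_{2n} aᵗ J_{2n}⁻¹, M = (F_q^{2n})² with diagonal right A-action, γ(u,(x,y)) = ψ([xu,y]) for u~ = u, and χ((x,y),(v,z)) = ψ([x,z]-[y,v]). Define U(γ,χ) as the group of A-linear automorphisms β of M with γ(u, β(x,y)) = γ(u,(x,y)) for all symmetric u and all (x,y), and χ(β(x,y),β(v,z)) = χ((x,y),(v,z)) for all elements. Then U(γ,χ) is isomorphic to SL₂(F_q): the A-linear automorphisms of M are exactly maps β(x,y) = (b₁x + b₃y, b₂x + b₄y) with bᵢ ∈ F_q, and β ∈ U(γ,χ) iff b₁b₄ - b₂b₃ = 1. -/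

import Mathlib

open Matrix

/-- `J_{2n} = [[0,Iₙ],[-Iₙ,0]] ∈ M_{2n}(F)`. -/
def Jn (F : Type) [Field F] (n : ℕ) : Matrix (Fin n ⊕ Fin n) (Fin n ⊕ Fin n) F :=
  fromBlocks 0 1 (-1) 0

/-- The involution `a~ = J_{2n} aᵗ J_{2n}⁻¹` on `M_{2n}(F)`. -/
noncomputable def tilde {F : Type} [Field F] {n : ℕ}
    (a : Matrix (Fin n ⊕ Fin n) (Fin n ⊕ Fin n) F) :
    Matrix (Fin n ⊕ Fin n) (Fin n ⊕ Fin n) F :=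
  Jn F n * aᵀ * (Jn F n)⁻¹

/-- The symplectic form `[x,y] = x J_{2n} yᵗ` on row vectors `V = F^{2n}`. -/
def symp {F : Type} [Field F] {n : ℕ} (x y : Fin n ⊕ Fin n → F) : F :=
  x ⬝ᵥ (Jn F n *ᵥ y)

section Aux

variable {F : Type} [Field F] {n : ℕ}

lemma myTwoNeZero (F : Type) [Field F] [Fintype F] (h : Odd (Fintype.card F)) : (2:F) ≠ 0 := by
  intro h2
  have h1 : ringChar F = 2 := CharP.ringChar_of_prime_eq_zero Nat.prime_two h2
  have h3 := FiniteField.even_card_of_char_two (F := F) h1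
  rcases h with ⟨k, hk⟩
  omega

lemma vecMul_std {m : Type} [Fintype m] [DecidableEq m]
    (i j : m) (x : m → F) :
    x ᵥ* Matrix.single i j (1:F) = x i • (Pi.single j 1 : m → F) := by
  ext j'
  simp only [vecMul, dotProduct, Matrix.single, of_apply, mul_ite, mul_one, mul_zero,
    Pi.smul_apply, Pi.single_apply, smul_eq_mul]
  by_cases h : j = j' <;> simp [h, eq_comm]

theorem scalar_of_comm (hn : 0 < n)
    (f : (Fin n ⊕ Fin n → F) → (Fin n ⊕ Fin n → F))
    (hsmul : ∀ (s : F) (v : Fin n ⊕ Fin n → F), f (s • v) = s • f v)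
    (hcomm : ∀ (a : Matrix (Fin n ⊕ Fin n) (Fin n ⊕ Fin n) F) x, f (x ᵥ* a) = f x ᵥ* a) :
    ∀ x, f x = f (Pi.single (Sum.inl ⟨0, hn⟩) 1) (Sum.inl ⟨0, hn⟩) • x := by
  set i0 : Fin n ⊕ Fin n := Sum.inl ⟨0, hn⟩ with hi0
  have key : ∀ (i j : Fin n ⊕ Fin n) x,
      x i • f (Pi.single j 1) = (f x) i • (Pi.single j 1 : Fin n ⊕ Fin n → F) := by
    intro i j x
    have h := hcomm (Matrix.single i j 1) x
    rwa [vecMul_std, vecMul_std, hsmul] at h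
  set c : F := f (Pi.single i0 1) i0 with hc
  have hsingle : ∀ j, f (Pi.single j 1) = c • (Pi.single j 1 : Fin n ⊕ Fin n → F) := by
    intro j
    have h := key i0 j (Pi.single i0 1)
    rwa [Pi.single_eq_same, one_smul] at h
  intro x
  funext i
  have h := congrFun (key i i0 x) i0
  rw [hsingle i0] at h
  simp only [Pi.smul_apply, Pi.single_eq_same, smul_eq_mul, mul_one] at h
  show f x i = c * x i
  rw [← h]; ring

lemma Jn_mul_Jn : Jn F n * Jn F n = -1 := by
  simp only [Jn, fromBlocks_multiply]
  rw [← Matrix.fromBlocks_one]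
  ext (i|i) (j|j) <;> simp [fromBlocks]

lemma Jn_transpose : (Jn F n)ᵀ = -(Jn F n) := by
  ext (i|i) (j|j) <;> simp [Jn, fromBlocks, transpose_apply, Matrix.one_apply, eq_comm]

lemma Jn_inv : (Jn F n)⁻¹ = -(Jn F n) := by
  apply Matrix.inv_eq_right_inv
  rw [Matrix.mul_neg, Jn_mul_Jn]; simp

lemma tilde_eq' {u : Matrix (Fin n ⊕ Fin n) (Fin n ⊕ Fin n) F} (hu : tilde u = u) :
    Jn F n * uᵀ = u * Jn F n := by
  have h := congrArg (· * Jn F n) hu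
  simp only [tilde, Jn_inv] at h
  rw [Matrix.mul_neg, Matrix.neg_mul, Matrix.mul_assoc (Jn F n * uᵀ), Jn_mul_Jn] at h
  simpa using h

lemma skew_of_tilde {u : Matrix (Fin n ⊕ Fin n) (Fin n ⊕ Fin n) F} (hu : tilde u = u) :
    (u * Jn F n)ᵀ = -(u * Jn F n) := by
  rw [Matrix.transpose_mul, Jn_transpose, Matrix.neg_mul, ← tilde_eq' hu]

lemma vecMul_skew {M : Matrix (Fin n ⊕ Fin n) (Fin n ⊕ Fin n) F} (hM : Mᵀ = -M)
    (x : Fin n ⊕ Fin n → F) : x ᵥ* M = -(M *ᵥ x) := by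
  rw [← Matrix.vecMul_transpose, hM, Matrix.vecMul_neg, neg_neg]

lemma dot_skew {M : Matrix (Fin n ⊕ Fin n) (Fin n ⊕ Fin n) F} (hM : Mᵀ = -M)
    (x y : Fin n ⊕ Fin n → F) : y ⬝ᵥ (M *ᵥ x) = -(x ⬝ᵥ (M *ᵥ y)) := by
  nth_rewrite 1 [dotProduct_mulVec]
  rw [vecMul_skew hM, neg_dotProduct, dotProduct_comm]

lemma dot_skew_self {M : Matrix (Fin n ⊕ Fin n) (Fin n ⊕ Fin n) F} (hM : Mᵀ = -M)
    (h2 : (2:F) ≠ 0) (x : Fin n ⊕ Fin n → F) : x ⬝ᵥ (M *ᵥ x) = 0 := by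
  have h := dot_skew hM x x
  have h2' : (2:F) * (x ⬝ᵥ (M *ᵥ x)) = 0 := by linear_combination h
  exact (mul_eq_zero.mp h2').resolve_left h2

lemma symp_vecMul (u : Matrix (Fin n ⊕ Fin n) (Fin n ⊕ Fin n) F) (x y : Fin n ⊕ Fin n → F) :
    symp (x ᵥ* u) y = x ⬝ᵥ ((u * Jn F n) *ᵥ y) := by
  rw [symp, dotProduct_mulVec, dotProduct_mulVec, Matrix.vecMul_vecMul]

lemma symp_smul_smul (a b : F) (x y : Fin n ⊕ Fin n → F) :
    symp (a • x) (b • y) = a * b * symp x y := by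
  simp [symp, Matrix.mulVec_smul, dotProduct_smul, smul_dotProduct, smul_eq_mul]; ring

lemma symp_smul_left (a : F) (x y : Fin n ⊕ Fin n → F) :
    symp (a • x) y = a * symp x y := by
  simp [symp, smul_dotProduct, smul_eq_mul]

lemma symp_smul_right (a : F) (x y : Fin n ⊕ Fin n → F) :
    symp x (a • y) = a * symp x y := by
  simp [symp, Matrix.mulVec_smul, dotProduct_smul, smul_eq_mul]

lemma symp_add_add (x x' y y' : Fin n ⊕ Fin n → F) :
    symp (x + x') (y + y') = symp x y + symp x y' + symp x' y + symp x' y' := by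
  simp [symp, Matrix.mulVec_add, dotProduct_add, add_dotProduct]; ring

lemma symp_comm' {F : Type} [Field F] {n : ℕ} (x y : Fin n ⊕ Fin n → F) :
    symp x y = -(symp y x) := by
  rw [symp, symp, ← dot_skew (M := Jn F n) (by rw [Jn_transpose]) y x]

lemma symp_zero_left (y : Fin n ⊕ Fin n → F) : symp 0 y = 0 := by
  simp [symp]

lemma symp_zero_right (x : Fin n ⊕ Fin n → F) : symp x 0 = 0 := by
  simp [symp]

lemma symp_single (hn : 0 < n) :
    symp (Pi.single (Sum.inl ⟨0,hn⟩) 1 : Fin n ⊕ Fin n → F)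
      (Pi.single (Sum.inr ⟨0,hn⟩) 1) = 1 := by
  simp [symp, Matrix.mulVec_single, single_dotProduct, Jn, fromBlocks,
    Matrix.one_apply]

lemma addchar_ne_zero (ψ : AddChar F ℂ) (t : F) : ψ t ≠ 0 := by
  have h4 : ψ t * ψ (-t) = 1 := by
    rw [← AddChar.map_add_eq_mul, add_neg_cancel, AddChar.map_zero_eq_one]
  exact left_ne_zero_of_mul_eq_one h4

lemma det_one_of_psi (ψ : AddChar F ℂ) (hψ : ψ ≠ 1) (d : F)
    (h : ∀ t, ψ (d * t) = ψ t) : d = 1 := by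
  by_contra hd
  apply hψ
  rw [AddChar.eq_one_iff]
  intro s
  have h1 : ∀ t : F, ψ ((d - 1) * t) = 1 := by
    intro t
    have h2 : ψ (d * t) = ψ ((d-1) * t) * ψ t := by
      rw [← AddChar.map_add_eq_mul]; ring_nf
    have h3 := h t
    rw [h2] at h3
    have h4 : ψ t ≠ 0 := addchar_ne_zero ψ t
    field_simp at h3
    exact h3
  have h5 := h1 ((d - 1)⁻¹ * s)
  rwa [← mul_assoc, mul_inv_cancel₀ (sub_ne_zero.mpr hd), one_mul] at h5

/-- right multiplication by a 2×2 matrix on `V × V`. -/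
def Tmap (n : ℕ) (b : Matrix (Fin 2) (Fin 2) F) :
    ((Fin n ⊕ Fin n → F) × (Fin n ⊕ Fin n → F)) →ₗ[F]
    ((Fin n ⊕ Fin n → F) × (Fin n ⊕ Fin n → F)) where
  toFun p := (b 0 0 • p.1 + b 1 0 • p.2, b 0 1 • p.1 + b 1 1 • p.2)
  map_add' p q := by
    simp only [Prod.fst_add, Prod.snd_add, smul_add, Prod.mk_add_mk, Prod.mk.injEq]
    constructor <;> abel
  map_smul' s p := by
    simp only [Prod.smul_fst, Prod.smul_snd, RingHom.id_apply, Prod.smul_mk, smul_add,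
      smul_smul, mul_comm, Prod.mk.injEq]

lemma Tmap_comp (b c : Matrix (Fin 2) (Fin 2) F) (p) :
    Tmap n b (Tmap n c p) = Tmap n (c * b) p := by
  simp only [Tmap, LinearMap.coe_mk, AddHom.coe_mk, Matrix.mul_apply, Fin.sum_univ_two,
    smul_add, smul_smul, add_smul, Prod.mk.injEq]
  constructor <;> · rw [mul_comm (c 0 0), mul_comm (c 0 1), mul_comm (c 1 0), mul_comm (c 1 1)]; abel

lemma Tmap_one (p) : Tmap (F := F) n 1 p = p := by
  simp [Tmap, Matrix.one_apply]

noncomputable def Emat (F : Type) [Field F] (n : ℕ) :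
    Matrix.SpecialLinearGroup (Fin 2) F →*
      (((Fin n ⊕ Fin n → F) × (Fin n ⊕ Fin n → F)) ≃ₗ[F]
       ((Fin n ⊕ Fin n → F) × (Fin n ⊕ Fin n → F))) where
  toFun g := LinearEquiv.ofLinear (Tmap n (g : Matrix (Fin 2) (Fin 2) F)ᵀ)
    (Tmap n ((g⁻¹ : Matrix.SpecialLinearGroup (Fin 2) F) : Matrix (Fin 2) (Fin 2) F)ᵀ)
    (by
      apply LinearMap.ext; intro p
      simp only [LinearMap.comp_apply, LinearMap.id_apply, Tmap_comp]
      rw [← Matrix.transpose_mul, ← Matrix.SpecialLinearGroup.coe_mul, mul_inv_cancel,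
        Matrix.SpecialLinearGroup.coe_one, Matrix.transpose_one, Tmap_one])
    (by
      apply LinearMap.ext; intro p
      simp only [LinearMap.comp_apply, LinearMap.id_apply, Tmap_comp]
      rw [← Matrix.transpose_mul, ← Matrix.SpecialLinearGroup.coe_mul, inv_mul_cancel,
        Matrix.SpecialLinearGroup.coe_one, Matrix.transpose_one, Tmap_one])
  map_one' := by
    apply LinearEquiv.ext; intro p
    show Tmap n ((1 : Matrix.SpecialLinearGroup (Fin 2) F) : Matrix (Fin 2) (Fin 2) F)ᵀ p = p
    rw [Matrix.SpecialLinearGroup.coe_one, Matrix.transpose_one, Tmap_one]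
  map_mul' g h := by
    apply LinearEquiv.ext; intro p
    show Tmap n (((g * h : Matrix.SpecialLinearGroup (Fin 2) F) :
      Matrix (Fin 2) (Fin 2) F))ᵀ p = Tmap n (g : Matrix (Fin 2) (Fin 2) F)ᵀ
        (Tmap n (h : Matrix (Fin 2) (Fin 2) F)ᵀ p)
    rw [Tmap_comp, ← Matrix.transpose_mul, Matrix.SpecialLinearGroup.coe_mul]

lemma Emat_apply (g : Matrix.SpecialLinearGroup (Fin 2) F)
    (p : (Fin n ⊕ Fin n → F) × (Fin n ⊕ Fin n → F)) :
    Emat F n g p = ((g : Matrix (Fin 2) (Fin 2) F) 0 0 • p.1 +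
      (g : Matrix (Fin 2) (Fin 2) F) 0 1 • p.2,
      (g : Matrix (Fin 2) (Fin 2) F) 1 0 • p.1 +
      (g : Matrix (Fin 2) (Fin 2) F) 1 1 • p.2) := by
  rfl

end Aux

/-- The unitary group `U(γ,χ)` of `A`-linear automorphisms of
`M = (F_q^{2n})²` preserving `γ` and `χ` is isomorphic to `SL₂(F_q)`: the `A`-linear
automorphisms are exactly the maps `β(x,y) = (b₁x + b₃y, b₂x + b₄y)` with `bᵢ ∈ F_q`,
and such a `β` lies in `U(γ,χ)` iff `b₁b₄ - b₂b₃ = 1`. -/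
theorem stmt15 (F : Type) [Field F] [Fintype F]
    (hq : Odd (Fintype.card F)) (hq3 : 3 < Fintype.card F)
    (ψ : AddChar F ℂ) (hψ : ψ ≠ 1) (n : ℕ) (hn : 0 < n) :
    letI V := Fin n ⊕ Fin n → F
    letI χ : V × V → V × V → ℂ := fun p r => ψ (symp p.1 r.2 - symp p.2 r.1)
    letI γ : Matrix (Fin n ⊕ Fin n) (Fin n ⊕ Fin n) F → V × V → ℂ :=
      fun u p => ψ (symp (p.1 ᵥ* u) p.2)
    letI Aequiv : ((V × V) ≃ₗ[F] (V × V)) → Prop := fun β =>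
      ∀ (a : Matrix (Fin n ⊕ Fin n) (Fin n ⊕ Fin n) F) (x y : V),
        β (x ᵥ* a, y ᵥ* a) = ((β (x, y)).1 ᵥ* a, (β (x, y)).2 ᵥ* a)
    letI γpres : ((V × V) ≃ₗ[F] (V × V)) → Prop := fun β =>
      ∀ u : Matrix (Fin n ⊕ Fin n) (Fin n ⊕ Fin n) F, tilde u = u →
        ∀ p : V × V, γ u (β p) = γ u p
    letI χpres : ((V × V) ≃ₗ[F] (V × V)) → Prop := fun β =>
      ∀ p r : V × V, χ (β p) (β r) = χ p r
    (∀ β : (V × V) ≃ₗ[F] (V × V), Aequiv β →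
      ∃ b₁ b₂ b₃ b₄ : F, ∀ x y : V, β (x, y) = (b₁ • x + b₃ • y, b₂ • x + b₄ • y)) ∧
    (∀ β : (V × V) ≃ₗ[F] (V × V), Aequiv β → ∀ b₁ b₂ b₃ b₄ : F,
      (∀ x y : V, β (x, y) = (b₁ • x + b₃ • y, b₂ • x + b₄ • y)) →
        ((γpres β ∧ χpres β) ↔ b₁ * b₄ - b₂ * b₃ = 1)) ∧
    (∀ S : Subgroup ((V × V) ≃ₗ[F] (V × V)),
      (∀ β, β ∈ S ↔ (Aequiv β ∧ γpres β ∧ χpres β)) →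
        Nonempty (S ≃* Matrix.SpecialLinearGroup (Fin 2) F)) := by
  have h2 : (2:F) ≠ 0 := myTwoNeZero F hq
  set i0 : Fin n ⊕ Fin n := Sum.inl ⟨0, hn⟩ with hi0
  set e₁ : Fin n ⊕ Fin n → F := Pi.single (Sum.inl ⟨0, hn⟩) 1 with he₁
  set e₂ : Fin n ⊕ Fin n → F := Pi.single (Sum.inr ⟨0, hn⟩) 1 with he₂
  -- PART 1
  have part1 : ∀ β : ((Fin n ⊕ Fin n → F) × (Fin n ⊕ Fin n → F)) ≃ₗ[F]
      ((Fin n ⊕ Fin n → F) × (Fin n ⊕ Fin n → F)),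
      (∀ (a : Matrix (Fin n ⊕ Fin n) (Fin n ⊕ Fin n) F) (x y : Fin n ⊕ Fin n → F),
        β (x ᵥ* a, y ᵥ* a) = ((β (x, y)).1 ᵥ* a, (β (x, y)).2 ᵥ* a)) →
      ∃ b₁ b₂ b₃ b₄ : F, ∀ x y : Fin n ⊕ Fin n → F,
        β (x, y) = (b₁ • x + b₃ • y, b₂ • x + b₄ • y) := by
    intro β hA
    have mk4 : ∀ (f : (Fin n ⊕ Fin n → F) → (Fin n ⊕ Fin n → F) × (Fin n ⊕ Fin n → F))
        (hlin : ∀ (s : F) (v : Fin n ⊕ Fin n → F), f (s • v) = s • f v)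
        (hc : ∀ a x, f (x ᵥ* a) = ((f x).1 ᵥ* a, (f x).2 ᵥ* a)),
        ∃ c d : F, ∀ x, f x = (c • x, d • x) := by
      intro f hlin hc
      obtain c1 := scalar_of_comm hn (fun x => (f x).1)
        (fun s v => by show (f (s • v)).1 = s • (f v).1; rw [hlin]; rfl)
        (fun a x => by show (f (x ᵥ* a)).1 = (f x).1 ᵥ* a; rw [hc])
      obtain c2 := scalar_of_comm hn (fun x => (f x).2)
        (fun s v => by show (f (s • v)).2 = s • (f v).2; rw [hlin]; rfl)
        (fun a x => by show (f (x ᵥ* a)).2 = (f x).2 ᵥ* a; rw [hc])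
      exact ⟨_, _, fun x => Prod.ext (c1 x) (c2 x)⟩
    obtain ⟨b₁, b₂, hf⟩ := mk4 (fun x => β (x, 0))
      (fun s v => by
        show β (s • v, 0) = s • β (v, 0)
        rw [show ((s • v, (0 : Fin n ⊕ Fin n → F))) = s • ((v, 0) :
          (Fin n ⊕ Fin n → F) × (Fin n ⊕ Fin n → F)) by simp, _root_.map_smul])
      (fun a x => by
        show β (x ᵥ* a, 0) = ((β (x, 0)).1 ᵥ* a, (β (x, 0)).2 ᵥ* a)
        rw [show ((x ᵥ* a, (0 : Fin n ⊕ Fin n → F))) = (x ᵥ* a, 0 ᵥ* a) by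
          rw [Matrix.zero_vecMul], hA])
    obtain ⟨b₃, b₄, hg⟩ := mk4 (fun y => β (0, y))
      (fun s v => by
        show β (0, s • v) = s • β (0, v)
        rw [show (((0 : Fin n ⊕ Fin n → F), s • v)) = s • ((0, v) :
          (Fin n ⊕ Fin n → F) × (Fin n ⊕ Fin n → F)) by simp, _root_.map_smul])
      (fun a y => by
        show β (0, y ᵥ* a) = ((β (0, y)).1 ᵥ* a, (β (0, y)).2 ᵥ* a)
        rw [show (((0 : Fin n ⊕ Fin n → F), y ᵥ* a)) = (0 ᵥ* a, y ᵥ* a) by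
          rw [Matrix.zero_vecMul], hA])
    refine ⟨b₁, b₂, b₃, b₄, fun x y => ?_⟩
    rw [show ((x, y) : (Fin n ⊕ Fin n → F) × (Fin n ⊕ Fin n → F)) = (x, 0) + (0, y) by simp,
      map_add, hf, hg, Prod.mk_add_mk]
  -- PART 2
  have part2 : ∀ β : ((Fin n ⊕ Fin n → F) × (Fin n ⊕ Fin n → F)) ≃ₗ[F]
      ((Fin n ⊕ Fin n → F) × (Fin n ⊕ Fin n → F)),
      (∀ (a : Matrix (Fin n ⊕ Fin n) (Fin n ⊕ Fin n) F) (x y : Fin n ⊕ Fin n → F),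
        β (x ᵥ* a, y ᵥ* a) = ((β (x, y)).1 ᵥ* a, (β (x, y)).2 ᵥ* a)) →
      ∀ b₁ b₂ b₃ b₄ : F,
      (∀ x y : Fin n ⊕ Fin n → F, β (x, y) = (b₁ • x + b₃ • y, b₂ • x + b₄ • y)) →
      (((∀ u : Matrix (Fin n ⊕ Fin n) (Fin n ⊕ Fin n) F, tilde u = u →
          ∀ p : (Fin n ⊕ Fin n → F) × (Fin n ⊕ Fin n → F),
            ψ (symp ((β p).1 ᵥ* u) (β p).2) = ψ (symp (p.1 ᵥ* u) p.2)) ∧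
        (∀ p r : (Fin n ⊕ Fin n → F) × (Fin n ⊕ Fin n → F),
          ψ (symp (β p).1 (β r).2 - symp (β p).2 (β r).1) = ψ (symp p.1 r.2 - symp p.2 r.1)))
        ↔ b₁ * b₄ - b₂ * b₃ = 1) := by
    intro β hA b₁ b₂ b₃ b₄ hb
    constructor
    · rintro ⟨-, hχ⟩
      apply det_one_of_psi ψ hψ
      intro t
      have h := hχ (t • e₁, 0) (0, e₂)
      rw [hb, hb] at h
      simp only [smul_zero, add_zero, zero_add] at h
      have hL : symp (b₁ • t • e₁) (b₄ • e₂) - symp (b₂ • t • e₁) (b₃ • e₂)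
          = (b₁ * b₄ - b₂ * b₃) * t := by
        rw [smul_smul, smul_smul, symp_smul_smul, symp_smul_smul, symp_single hn]; ring
      have hR : symp (t • e₁) e₂ - symp (0 : Fin n ⊕ Fin n → F) (0 : Fin n ⊕ Fin n → F)
          = t := by
        rw [symp_smul_left, symp_single hn, symp_zero_left]; ring
      rw [hL, hR] at h
      exact h
    · intro hd
      constructor
      · intro u hu p
        obtain ⟨x, y⟩ := p
        rw [hb]
        congr 1
        show symp ((b₁ • x + b₃ • y) ᵥ* u) (b₂ • x + b₄ • y) = symp (x ᵥ* u) y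
        rw [Matrix.add_vecMul, Matrix.smul_vecMul, Matrix.smul_vecMul, symp_add_add,
          symp_smul_smul, symp_smul_smul, symp_smul_smul, symp_smul_smul,
          symp_vecMul, symp_vecMul, symp_vecMul, symp_vecMul]
        have hsk := skew_of_tilde hu
        rw [dot_skew_self hsk h2, dot_skew_self hsk h2]
        have hskew := dot_skew hsk x y
        linear_combination (x ⬝ᵥ ((u * Jn F n) *ᵥ y)) * hd + (b₃ * b₂) * hskew
      · intro p r
        obtain ⟨x, y⟩ := p
        obtain ⟨v, z⟩ := r
        rw [hb, hb]
        congr 1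
        show symp (b₁ • x + b₃ • y) (b₂ • v + b₄ • z)
            - symp (b₂ • x + b₄ • y) (b₁ • v + b₃ • z) = symp x z - symp y v
        rw [symp_add_add, symp_add_add, symp_smul_smul, symp_smul_smul, symp_smul_smul,
          symp_smul_smul, symp_smul_smul, symp_smul_smul, symp_smul_smul, symp_smul_smul]
        linear_combination (symp x z) * hd - (symp y v) * hd
  refine ⟨part1, part2, ?_⟩
  -- PART 3
  intro S hS
  have hmem : ∀ g : Matrix.SpecialLinearGroup (Fin 2) F, Emat F n g ∈ S := by
    intro g
    rw [hS]
    have hA : ∀ (a : Matrix (Fin n ⊕ Fin n) (Fin n ⊕ Fin n) F) (x y : Fin n ⊕ Fin n → F),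
        Emat F n g (x ᵥ* a, y ᵥ* a)
          = ((Emat F n g (x, y)).1 ᵥ* a, (Emat F n g (x, y)).2 ᵥ* a) := by
      intro a x y
      rw [Emat_apply, Emat_apply]
      simp only [Matrix.add_vecMul, Matrix.smul_vecMul]
    have hb : ∀ x y : Fin n ⊕ Fin n → F, Emat F n g (x, y) =
        ((g : Matrix (Fin 2) (Fin 2) F) 0 0 • x + (g : Matrix (Fin 2) (Fin 2) F) 0 1 • y,
         (g : Matrix (Fin 2) (Fin 2) F) 1 0 • x + (g : Matrix (Fin 2) (Fin 2) F) 1 1 • y) := by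
      intro x y; rw [Emat_apply]
    refine ⟨hA, (part2 (Emat F n g) hA _ _ _ _ hb).mpr ?_⟩
    have hdet := g.2
    rw [Matrix.det_fin_two] at hdet
    linear_combination hdet
  set Φ : Matrix.SpecialLinearGroup (Fin 2) F →* S :=
    MonoidHom.codRestrict (Emat F n) S hmem with hΦ
  have hinj : Function.Injective Φ := by
    intro g h hgh
    have hE : Emat F n g = Emat F n h := congrArg Subtype.val hgh
    have key : ∀ (i : Fin 2), (g : Matrix (Fin 2) (Fin 2) F) i 0
        = (h : Matrix (Fin 2) (Fin 2) F) i 0 ∧ (g : Matrix (Fin 2) (Fin 2) F) i 1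
        = (h : Matrix (Fin 2) (Fin 2) F) i 1 := by
      intro i
      have h1 := congrArg
        (fun e : ((Fin n ⊕ Fin n → F) × (Fin n ⊕ Fin n → F)) ≃ₗ[F]
          ((Fin n ⊕ Fin n → F) × (Fin n ⊕ Fin n → F)) => e (e₁, 0)) hE
      have h2 := congrArg
        (fun e : ((Fin n ⊕ Fin n → F) × (Fin n ⊕ Fin n → F)) ≃ₗ[F]
          ((Fin n ⊕ Fin n → F) × (Fin n ⊕ Fin n → F)) => e (0, e₁)) hE
      simp only [Emat_apply, smul_zero, add_zero, zero_add] at h1 h2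
      fin_cases i
      · constructor
        · have := congrFun (congrArg Prod.fst h1) i0
          simpa [he₁, hi0, Pi.single_eq_same] using this
        · have := congrFun (congrArg Prod.fst h2) i0
          simpa [he₁, hi0, Pi.single_eq_same] using this
      · constructor
        · have := congrFun (congrArg Prod.snd h1) i0
          simpa [he₁, hi0, Pi.single_eq_same] using this
        · have := congrFun (congrArg Prod.snd h2) i0
          simpa [he₁, hi0, Pi.single_eq_same] using this
    apply Subtype.ext
    ext i j
    fin_cases j
    · exact (key i).1
    · exact (key i).2
  have hsurj : Function.Surjective Φ := by
    rintro ⟨β, hβ⟩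
    rw [hS] at hβ
    obtain ⟨hA, hγχ⟩ := hβ
    obtain ⟨b₁, b₂, b₃, b₄, hb⟩ := part1 β hA
    have hd := (part2 β hA b₁ b₂ b₃ b₄ hb).mp hγχ
    refine ⟨⟨!![b₁, b₃; b₂, b₄], by rw [Matrix.det_fin_two]; simp; linear_combination hd⟩, ?_⟩
    apply Subtype.ext
    show Emat F n _ = β
    apply LinearEquiv.ext
    intro p
    refine (Emat_apply _ p).trans ?_
    have hp : p = (p.1, p.2) := rfl
    rw [hp, hb p.1 p.2]
    simp
  exact ⟨(MulEquiv.ofBijective Φ ⟨hinj, hsurj⟩).symm⟩
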